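/- Triviality of the graded commutant of the fermion operators: if A ∈ M satisfies a_k A = (G A G) a_k and a_kᴴ A = (G A G) a_kᴴ for every site k ∈ Fin n (i.e. the graded commutators of A with every a_k and a_kᴴ vanish), then A is a scalar multiple of the identity matrix. -/

import Mathlib

open Matrix

noncomputable section JW

/-- The operator algebra of `n` fermionic sites: `2^n × 2^n` complex matrices, with the
index set realized as `Fin n → Fin 2` (the tensor-product basis). -/
abbrev FermionAlg (n : ℕ) := Matrix (Fin n → Fin 2) (Fin n → Fin 2) ℂ

/-- Jordan–Wigner annihilation operator at site `k`:
`a_k = σ₃^{⊗ k} ⊗ σ⁻ ⊗ 1₂^{⊗ (n−k−1)}`, with `σ⁻ = [[0,0],[1,0]]` and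
`σ₃ = [[1,0],[0,−1]]`, written entrywise in the tensor-product basis
(the entry of a tensor product at `(v, w)` is the product of the entries of the factors). -/
def jwA (n : ℕ) (k : Fin n) : FermionAlg n :=
  Matrix.of fun v w => ∏ j : Fin n,
    if j < k then (if v j = w j then (-1 : ℂ) ^ (v j : ℕ) else 0)
    else if j = k then (if v j = 1 ∧ w j = 0 then 1 else 0)
    else (if v j = w j then 1 else 0)

/-- The number operator `n_k = a_kᴴ a_k`. -/
def numOp (n : ℕ) (k : Fin n) : FermionAlg n := (jwA n k)ᴴ * jwA n k

/-- The grading unitary `G = ∏_k (1 − 2 n_k)`. -/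
def grading (n : ℕ) : FermionAlg n :=
  (List.ofFn fun k : Fin n => (1 - 2 • numOp n k)).prod

/-- The free energy `F = Σ_k (ε_k − μ) n_k`. -/
def freeEnergy (n : ℕ) (ε : Fin n → ℝ) (μ : ℝ) : FermionAlg n :=
  ∑ k, ((ε k - μ : ℝ) : ℂ) • numOp n k

/-- The Gibbs state `ρ(A) = Tr(exp(−βF)·A)/Tr(exp(−βF))`. -/
def gibbs (n : ℕ) (ε : Fin n → ℝ) (μ β : ℝ) (A : FermionAlg n) : ℂ :=
  ((NormedSpace.exp ((-(β : ℂ)) • freeEnergy n ε μ)) * A).trace /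
    (NormedSpace.exp ((-(β : ℂ)) • freeEnergy n ε μ)).trace

end JW

section Aux

variable {n : ℕ}

private lemma fin2 (x : Fin 2) : x = 0 ∨ x = 1 := by fin_cases x <;> simp

/-- The Jordan–Wigner sign. -/
private def Sgn (k : Fin n) (v : Fin n → Fin 2) : ℂ :=
  ∏ j : Fin n, if j < k then (-1 : ℂ) ^ (v j : ℕ) else 1

private lemma Sgn_mul_self (k : Fin n) (v : Fin n → Fin 2) : Sgn k v * Sgn k v = 1 := by
  rw [Sgn, ← Finset.prod_mul_distrib]
  apply Finset.prod_eq_one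
  intro j _
  split
  · rw [← mul_pow]; norm_num
  · norm_num

private lemma Sgn_ne_zero (k : Fin n) (v : Fin n → Fin 2) : Sgn k v ≠ 0 := by
  intro h
  have h2 := Sgn_mul_self k v
  rw [h, mul_zero] at h2
  exact zero_ne_one h2

private lemma star_Sgn (k : Fin n) (v : Fin n → Fin 2) : star (Sgn k v) = Sgn k v := by
  rw [Sgn, star_prod]
  apply Finset.prod_congr rfl
  intro j _
  split
  · rw [star_pow, star_neg, star_one]
  · exact star_one _

private lemma jwA_apply (k : Fin n) (v w : Fin n → Fin 2) :
    jwA n k v w =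
      if w = Function.update v k 0 ∧ v k = 1 then Sgn k v else 0 := by
  rw [jwA, Matrix.of_apply]
  split_ifs with h
  · obtain ⟨hw, hv⟩ := h
    subst hw
    rw [Sgn]
    apply Finset.prod_congr rfl
    intro j _
    by_cases hjk : j < k
    · have hne : j ≠ k := Fin.ne_of_lt hjk
      simp [hjk, Function.update_of_ne hne]
    · by_cases hj : j = k
      · subst hj
        simp [hjk, hv]
      · simp [hjk, hj, Function.update_of_ne hj]
  · by_cases hv : v k = 1
    · by_cases hwk : w k = 0
      · have hex : ∃ j, w j ≠ Function.update v k 0 j := by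
          by_contra hc
          push_neg at hc
          exact h ⟨funext hc, hv⟩
        obtain ⟨j, hj⟩ := hex
        have hjk : j ≠ k := by
          rintro rfl
          rw [Function.update_self, hwk] at hj
          exact hj rfl
        have hwv : ¬ v j = w j := by
          rw [Function.update_of_ne hjk] at hj
          exact fun hh => hj hh.symm
        apply Finset.prod_eq_zero (Finset.mem_univ j)
        by_cases hlt : j < k
        · simp [hlt, hwv]
        · simp [hlt, hjk, hwv]
      · apply Finset.prod_eq_zero (Finset.mem_univ k)
        simp [hwk]
    · apply Finset.prod_eq_zero (Finset.mem_univ k)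
      simp [hv]

private lemma eq_update_iff (k : Fin n) (u v : Fin n → Fin 2) (hv : v k = 1) :
    (Function.update v k 0 = Function.update u k 0 ∧ u k = 1) ↔ u = v := by
  constructor
  · rintro ⟨h1, h2⟩
    funext j
    by_cases hj : j = k
    · subst hj; rw [h2, hv]
    · have := congrFun h1 j
      rwa [Function.update_of_ne hj, Function.update_of_ne hj, eq_comm] at this
  · rintro rfl
    exact ⟨rfl, hv⟩

private lemma mulA_left (A : FermionAlg n) (k : Fin n) (v w : Fin n → Fin 2)
    (hv : v k = 1) :
    (jwA n k * A) v w = Sgn k v * A (Function.update v k 0) w := by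
  rw [Matrix.mul_apply]
  simp only [jwA_apply, hv, and_true, ite_mul, zero_mul]
  rw [Finset.sum_ite_eq' Finset.univ (Function.update v k 0)
    (fun u => Sgn k v * A u w)]
  simp

private lemma mulAdag_left (A : FermionAlg n) (k : Fin n) (v w : Fin n → Fin 2)
    (hv : v k = 1) :
    ((jwA n k)ᴴ * A) (Function.update v k 0) w = star (Sgn k v) * A v w := by
  rw [Matrix.mul_apply]
  simp only [Matrix.conjTranspose_apply, jwA_apply]
  rw [Finset.sum_congr rfl (fun u _ => by
    rw [if_congr (eq_update_iff k u v hv) rfl rfl, apply_ite star, star_zero])]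
  simp only [ite_mul, zero_mul]
  rw [Finset.sum_ite_eq' Finset.univ v (fun u => star (Sgn k u) * A u w)]
  simp

private lemma mulA_right (B : FermionAlg n) (k : Fin n) (v w : Fin n → Fin 2)
    (hv : v k = 1) :
    (B * jwA n k) w (Function.update v k 0) = B w v * Sgn k v := by
  rw [Matrix.mul_apply]
  simp only [jwA_apply]
  rw [Finset.sum_congr rfl (fun u _ => by rw [if_congr (eq_update_iff k u v hv) rfl rfl])]
  simp only [mul_ite, mul_zero]
  rw [Finset.sum_ite_eq' Finset.univ v (fun u => B w u * Sgn k u)]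
  simp

private lemma mulA_right_zero (B : FermionAlg n) (k : Fin n) (v w : Fin n → Fin 2)
    (hw : w k = 1) :
    (B * jwA n k) v w = 0 := by
  rw [Matrix.mul_apply]
  apply Finset.sum_eq_zero
  intro u _
  rw [jwA_apply, if_neg, mul_zero]
  rintro ⟨h1, -⟩
  have := congrFun h1 k
  rw [Function.update_self, hw] at this
  exact one_ne_zero this

private lemma mulAdag_right_zero (B : FermionAlg n) (k : Fin n) (v w : Fin n → Fin 2)
    (hw : w k = 0) :
    (B * (jwA n k)ᴴ) v w = 0 := by
  rw [Matrix.mul_apply]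
  apply Finset.sum_eq_zero
  intro u _
  rw [Matrix.conjTranspose_apply, jwA_apply, if_neg, star_zero, mul_zero]
  rintro ⟨-, h2⟩
  rw [hw] at h2
  exact zero_ne_one h2

private lemma numOp_eq (k : Fin n) :
    numOp n k = Matrix.diagonal (fun v => if v k = 0 then (1 : ℂ) else 0) := by
  ext v w
  rw [numOp, Matrix.mul_apply, Matrix.diagonal_apply]
  simp only [Matrix.conjTranspose_apply, jwA_apply]
  rw [Finset.sum_eq_single (Function.update v k 1)]
  · by_cases hv : v k = 0
    · have hup : Function.update v k (0 : Fin 2) = v := by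
        rw [show (0 : Fin 2) = v k from hv.symm]; exact Function.update_eq_self k v
      have h1 : v = Function.update (Function.update v k 1) k 0 := by
        rw [Function.update_idem, hup]
      have hk1 : Function.update v k (1 : Fin 2) k = 1 := Function.update_self k 1 v
      rw [if_pos ⟨h1, hk1⟩]
      by_cases hw : w = v
      · subst hw
        rw [if_pos ⟨h1, hk1⟩, if_pos rfl, if_pos hv, star_Sgn, Sgn_mul_self]
      · rw [if_neg, mul_zero, if_neg (fun hh => hw hh.symm)]
        rintro ⟨h2, -⟩
        rw [Function.update_idem, hup] at h2
        exact hw h2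
    · rw [if_neg, star_zero, zero_mul]
      · by_cases hvw : v = w
        · rw [if_pos hvw, if_neg hv]
        · rw [if_neg hvw]
      · rintro ⟨h2, -⟩
        have := congrFun h2 k
        rw [Function.update_idem, Function.update_self] at this
        exact hv this
  · intro u _ hu
    rw [if_neg, star_zero, zero_mul]
    rintro ⟨h1, h2⟩
    apply hu
    funext j
    by_cases hj : j = k
    · subst hj; rw [h2, Function.update_self]
    · rw [Function.update_of_ne hj]
      have := congrFun h1 j
      rw [Function.update_of_ne hj] at this
      exact this.symm
  · intro hmem
    exact absurd (Finset.mem_univ _) hmem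

/-- Diagonal entries of the grading. -/
private def gr (v : Fin n → Fin 2) : ℂ := ∏ j : Fin n, if v j = 0 then (-1 : ℂ) else 1

private lemma gr_mul_self (v : Fin n → Fin 2) : gr v * gr v = 1 := by
  rw [gr, ← Finset.prod_mul_distrib]
  apply Finset.prod_eq_one
  intro j _
  split <;> norm_num

private lemma diag_list_prod (l : List ((Fin n → Fin 2) → ℂ)) :
    (l.map Matrix.diagonal).prod =
      Matrix.diagonal (fun v => (l.map (fun d => d v)).prod) := by
  induction l with
  | nil => simp [Matrix.diagonal_one]
  | cons a l ih =>
      simp only [List.map_cons, List.prod_cons, ih, Matrix.diagonal_mul_diagonal]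

private lemma grading_eq : grading n = Matrix.diagonal (gr (n := n)) := by
  have h1 : (fun k : Fin n => (1 - 2 • numOp n k)) =
      fun k => Matrix.diagonal (fun v => if v k = 0 then (-1 : ℂ) else 1) := by
    funext k
    rw [numOp_eq, two_smul]
    ext v w
    simp only [Matrix.sub_apply, Matrix.add_apply, Matrix.one_apply, Matrix.diagonal_apply]
    by_cases h : v = w
    · subst h
      simp only [if_pos rfl]
      split_ifs <;> norm_num
    · simp [h]
  have h2 : ∀ (e : Fin n → (Fin n → Fin 2) → ℂ),
      (List.ofFn fun k => Matrix.diagonal (e k)) = (List.ofFn e).map Matrix.diagonal := by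
    intro e
    rw [List.map_ofFn]
    rfl
  have h3 : ∀ (e : Fin n → (Fin n → Fin 2) → ℂ) (v : Fin n → Fin 2),
      (List.ofFn e).map (fun d => d v) = List.ofFn (fun k => e k v) := by
    intro e v
    rw [List.map_ofFn]
    rfl
  have h4 : (fun v : Fin n → Fin 2 => (List.map (fun d => d v)
      (List.ofFn fun k (v : Fin n → Fin 2) => if v k = 0 then (-1 : ℂ) else 1)).prod)
      = gr := by
    funext v
    rw [h3, List.prod_ofFn, gr]
  rw [grading, h1, h2, diag_list_prod, h4]

private lemma GAG_apply (A : FermionAlg n) (v w : Fin n → Fin 2) :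
    (grading n * A * grading n) v w = gr v * A v w * gr w := by
  rw [grading_eq, Matrix.mul_diagonal, Matrix.diagonal_mul]

end Aux

/-- **triviality of the graded commutant.** If `A ∈ M` satisfies
`a_k A = (G A G) a_k` and `a_kᴴ A = (G A G) a_kᴴ` for every site `k` (i.e. the graded
commutators of `A` with all `a_k`, `a_kᴴ` vanish), then `A` is a scalar multiple of the
identity matrix. -/
theorem graded_commutant_trivial
    (n : ℕ) (hn : 1 ≤ n) (A : FermionAlg n)
    (ha : ∀ k : Fin n, jwA n k * A = (grading n * A * grading n) * jwA n k)
    (hadag : ∀ k : Fin n, (jwA n k)ᴴ * A = (grading n * A * grading n) * (jwA n k)ᴴ) :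
    ∃ c : ℂ, A = c • (1 : FermionAlg n) := by
  classical
  have hdiag : ∀ v w : Fin n → Fin 2, v ≠ w → A v w = 0 := by
    intro v w hvw
    have hex : ∃ k, ¬ v k = w k := by
      by_contra hc
      push_neg at hc
      exact hvw (funext hc)
    obtain ⟨k, hk⟩ := hex
    rcases fin2 (v k) with hv | hv
    · have hw : w k = 1 := by
        rcases fin2 (w k) with h | h
        · exact absurd (hv.trans h.symm) hk
        · exact h
      have H := Matrix.ext_iff.2 (ha k) (Function.update v k 1) w
      rw [mulA_left A k (Function.update v k 1) w (Function.update_self k 1 v),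
        mulA_right_zero _ k _ w hw, Function.update_idem] at H
      rw [show Function.update v k (0 : Fin 2) = v from by
        rw [show (0 : Fin 2) = v k from hv.symm]; exact Function.update_eq_self k v] at H
      exact (mul_eq_zero.1 H).resolve_left (Sgn_ne_zero k _)
    · have hw : w k = 0 := by
        rcases fin2 (w k) with h | h
        · exact h
        · exact absurd (hv.trans h.symm) hk
      have H := Matrix.ext_iff.2 (hadag k) (Function.update v k 0) w
      rw [mulAdag_left A k v w hv, mulAdag_right_zero _ k _ w hw] at H
      have hs : star (Sgn k v) ≠ 0 := by rw [star_Sgn]; exact Sgn_ne_zero k v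
      exact (mul_eq_zero.1 H).resolve_left hs
  have hstep : ∀ (v : Fin n → Fin 2) (k : Fin n), v k = 1 →
      A v v = A (Function.update v k 0) (Function.update v k 0) := by
    intro v k hv
    have H := Matrix.ext_iff.2 (ha k) v (Function.update v k 0)
    rw [mulA_left A k v _ hv, mulA_right _ k v v hv, GAG_apply] at H
    have hg : gr v * A v v * gr v = A v v := by
      have h2 := gr_mul_self (n := n) v
      calc gr v * A v v * gr v = gr v * gr v * A v v := by ring
        _ = A v v := by rw [h2, one_mul]
    rw [hg, mul_comm] at H
    exact (mul_right_cancel₀ (Sgn_ne_zero k v) H).symm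
  have hconst : ∀ (m : ℕ) (v : Fin n → Fin 2),
      (Finset.univ.filter fun j => v j = 1).card ≤ m →
      A v v = A (fun _ => 0) (fun _ => 0) := by
    intro m
    induction m with
    | zero =>
        intro v hv
        have hvz : v = fun _ => 0 := by
          funext j
          rcases fin2 (v j) with h | h
          · exact h
          · exfalso
            have hmem : j ∈ Finset.univ.filter fun j => v j = 1 := by simp [h]
            have := Finset.card_pos.2 ⟨j, hmem⟩
            omega
        rw [hvz]
    | succ m ih =>
        intro v hv
        by_cases hex : ∃ k, v k = 1
        · obtain ⟨k, hk⟩ := hex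
          rw [hstep v k hk]
          apply ih
          have hsub : (Finset.univ.filter fun j => Function.update v k 0 j = 1)
              = (Finset.univ.filter fun j => v j = 1).erase k := by
            ext j
            simp only [Finset.mem_filter, Finset.mem_erase, Finset.mem_univ, true_and]
            by_cases hj : j = k
            · subst hj
              simp [Function.update_self]
            · simp [Function.update_of_ne hj, hj]
          have hkmem : k ∈ Finset.univ.filter fun j => v j = 1 := by simp [hk]
          have h1 := Finset.card_erase_of_mem hkmem
          have h2 := Finset.card_pos.2 ⟨k, hkmem⟩
          rw [hsub]
          omega
        · push_neg at hex
          have hvz : v = fun _ => 0 := by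
            funext j
            rcases fin2 (v j) with h | h
            · exact h
            · exact absurd h (hex j)
          rw [hvz]
  refine ⟨A (fun _ => 0) (fun _ => 0), ?_⟩
  ext v w
  by_cases h : v = w
  · subst h
    rw [Matrix.smul_apply, Matrix.one_apply_eq, smul_eq_mul, mul_one]
    exact hconst _ v le_rfl
  · rw [hdiag v w h, Matrix.smul_apply, Matrix.one_apply_ne h, smul_eq_mul, mul_zero]
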